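/- Let m ≥ 2, n ≥ 3m-2 be integers, (K,w) an F_3-weighted complete graph containing no induced subgraph switching equivalent to K̃_{2m}^{(0)} or K̃_{2m}^{(-1)}, and C a (+1)-clique of (K,w) with at least n vertices. Then every vertex x of K has, for exactly one ε ∈ {0,+1,-1}, at least m (ε)-neighbors in C, and for each of the other two values ε' it has at most m-1 (ε')-neighbors in C. -/
import Mathlib


open Matrix

/-- The `F₃`-weighted complete graph `K̃_{2m}^{(c)}` on vertices `{0,1,…,2m}`:
all pairs among `{1,…,2m}` have weight `+1`; pairs `{0,j}` have weight `+1` for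
`1 ≤ j ≤ m` and weight `c` for `m < j ≤ 2m`. -/
def KtildeMat (m : ℕ) (c : ℤ) : Matrix (Fin (2 * m + 1)) (Fin (2 * m + 1)) ℤ :=
  Matrix.of fun i j =>
    if i = j then 0
    else if i = 0 then (if (j : ℕ) ≤ m then 1 else c)
    else if j = 0 then (if (i : ℕ) ≤ m then 1 else c)
    else 1

/-- `w` contains an induced subgraph switching equivalent to the weighted
complete graph given by the symmetric matrix `M`. -/
def HasSwitchedCopy {V : Type} (w : V → V → ℤ) {k : ℕ}
    (M : Matrix (Fin k) (Fin k) ℤ) : Prop :=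
  ∃ (f : Fin k ↪ V) (ε : Fin k → ℤ), (∀ i, ε i = 1 ∨ ε i = -1) ∧
    ∀ i j, i ≠ j → ε i * w (f i) (f j) * ε j = M i j

/-- In a `{K̃_{2m}^{(0)}, K̃_{2m}^{(-1)}}`-switching-free `F₃`-weighted complete
graph, relative to a `(+1)`-clique `C` with at least `n ≥ 3m-2` vertices, every
vertex has at least `m` `(ε)`-neighbors in `C` for exactly one `ε ∈ {0,+1,-1}`,
and at most `m-1` `(ε')`-neighbors for each other `ε'`. -/
lemma buildCopy {V : Type} [DecidableEq V]
    (m : ℕ) (w : V → V → ℤ) (hsym : ∀ x y, w x y = w y x)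
    (x : V) (A B : Finset V) (hA : A.card = m) (hB : B.card = m)
    (hAB : Disjoint A B) (hxA : x ∉ A) (hxB : x ∉ B)
    (hclique : ∀ a ∈ A ∪ B, ∀ b ∈ A ∪ B, a ≠ b → w a b = 1)
    (s c : ℤ) (hs : s = 1 ∨ s = -1)
    (hwa : ∀ a ∈ A, s * w x a = 1)
    (hwb : ∀ b ∈ B, s * w x b = c) :
    HasSwitchedCopy w (KtildeMat m c) := by
  classical
  set eA : Fin m → V := fun k => ((A.equivFin.symm (Fin.cast hA.symm k)) : V) with heAdef
  set eB : Fin m → V := fun k => ((B.equivFin.symm (Fin.cast hB.symm k)) : V) with heBdef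
  have heA : ∀ k, eA k ∈ A := fun k => (A.equivFin.symm _).2
  have heB : ∀ k, eB k ∈ B := fun k => (B.equivFin.symm _).2
  have heAinj : Function.Injective eA := by
    intro a b h
    have h2 := A.equivFin.symm.injective (Subtype.ext h)
    have h3 := congrArg Fin.val h2
    exact Fin.ext h3
  have heBinj : Function.Injective eB := by
    intro a b h
    have h2 := B.equivFin.symm.injective (Subtype.ext h)
    have h3 := congrArg Fin.val h2
    exact Fin.ext h3
  set g : Fin (2*m+1) → V := fun i =>
    if h0 : (i : ℕ) = 0 then x
    else if hle : (i : ℕ) ≤ m then eA ⟨(i:ℕ) - 1, by omega⟩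
    else eB ⟨(i:ℕ) - 1 - m, by have := i.isLt; omega⟩ with hgdef
  have hgx : ∀ i : Fin (2*m+1), (i:ℕ) = 0 → g i = x := by
    intro i h; simp only [hgdef, dif_pos h]
  have hgA : ∀ i : Fin (2*m+1), ∀ h1 : (i:ℕ) ≠ 0, ∀ h2 : (i:ℕ) ≤ m,
      g i = eA ⟨(i:ℕ) - 1, by omega⟩ := by
    intro i h1 h2; simp only [hgdef, dif_neg h1, dif_pos h2]
  have hgB : ∀ i : Fin (2*m+1), ∀ h2 : ¬ ((i:ℕ) ≤ m),
      g i = eB ⟨(i:ℕ) - 1 - m, by have := i.isLt; omega⟩ := by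
    intro i h2
    have h1 : (i:ℕ) ≠ 0 := by omega
    simp only [hgdef, dif_neg h1, dif_neg h2]
  have hgmem : ∀ i : Fin (2*m+1), (i:ℕ) ≠ 0 → g i ∈ A ∪ B := by
    intro i h1
    by_cases h2 : (i:ℕ) ≤ m
    · rw [hgA i h1 h2]; exact Finset.mem_union_left _ (heA _)
    · rw [hgB i h2]; exact Finset.mem_union_right _ (heB _)
  have hginj : Function.Injective g := by
    intro i j hgij
    by_cases hi0 : (i:ℕ) = 0 <;> by_cases hj0 : (j:ℕ) = 0
    · exact Fin.ext (hi0.trans hj0.symm)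
    · exfalso
      rw [hgx i hi0] at hgij
      have hx : x ∈ A ∪ B := by rw [hgij]; exact hgmem j hj0
      rcases Finset.mem_union.mp hx with h | h
      exacts [hxA h, hxB h]
    · exfalso
      rw [hgx j hj0] at hgij
      have hx : x ∈ A ∪ B := by rw [← hgij]; exact hgmem i hi0
      rcases Finset.mem_union.mp hx with h | h
      exacts [hxA h, hxB h]
    · by_cases him : (i:ℕ) ≤ m <;> by_cases hjm : (j:ℕ) ≤ m
      · rw [hgA i hi0 him, hgA j hj0 hjm] at hgij
        have h3 := congrArg Fin.val (heAinj hgij)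
        simp only at h3
        exact Fin.ext (by omega)
      · exfalso
        rw [hgA i hi0 him, hgB j hjm] at hgij
        exact Finset.disjoint_left.mp hAB (by rw [← hgij]; exact heA _) (heB _)
      · exfalso
        rw [hgB i him, hgA j hj0 hjm] at hgij
        exact Finset.disjoint_left.mp hAB (by rw [hgij]; exact heA _) (heB _)
      · rw [hgB i him, hgB j hjm] at hgij
        have h3 := congrArg Fin.val (heBinj hgij)
        simp only at h3
        have hi := i.isLt; have hj := j.isLt
        exact Fin.ext (by omega)
  refine ⟨⟨g, hginj⟩, fun i => if (i:ℕ) = 0 then s else 1, ?_, ?_⟩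
  · intro i; dsimp only; split
    exacts [hs, Or.inl rfl]
  · intro i j hij
    have hij' : (i:ℕ) ≠ (j:ℕ) := fun h => hij (Fin.ext h)
    simp only [KtildeMat, Matrix.of_apply, Function.Embedding.coeFn_mk]
    rw [if_neg hij]
    have hz : ((0 : Fin (2*m+1)) : ℕ) = 0 := rfl
    by_cases hi0 : (i:ℕ) = 0
    · have hi0' : i = 0 := Fin.ext (by rw [hi0, hz])
      have hj0 : (j:ℕ) ≠ 0 := by omega
      rw [if_pos hi0', hgx i hi0, if_pos hi0, if_neg hj0, mul_one]
      by_cases hjm : (j:ℕ) ≤ m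
      · rw [if_pos hjm, hgA j hj0 hjm]; exact hwa _ (heA _)
      · rw [if_neg hjm, hgB j hjm]; exact hwb _ (heB _)
    · have hi0' : i ≠ 0 := fun h => hi0 (by rw [h, hz])
      rw [if_neg hi0', if_neg hi0]
      by_cases hj0 : (j:ℕ) = 0
      · have hj0' : j = 0 := Fin.ext (by rw [hj0, hz])
        rw [if_pos hj0', hgx j hj0, if_pos hj0, one_mul, hsym (g i) x, mul_comm]
        by_cases him : (i:ℕ) ≤ m
        · rw [if_pos him, hgA i hi0 him]; exact hwa _ (heA _)
        · rw [if_neg him, hgB i him]; exact hwb _ (heB _)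
      · have hj0' : j ≠ 0 := fun h => hj0 (by rw [h, hz])
        rw [if_neg hj0', if_neg hj0, one_mul, mul_one]
        have hne : g i ≠ g j := fun h => hij (hginj h)
        exact hclique _ (hgmem i hi0) _ (hgmem j hj0) hne

lemma notBoth {V : Type} [DecidableEq V]
    (m : ℕ) (w : V → V → ℤ) (hsym : ∀ x y, w x y = w y x)
    (C : Finset V) (hC : ∀ x ∈ C, ∀ y ∈ C, x ≠ y → w x y = 1)
    (x : V) (ε₁ ε₂ s c : ℤ) (hs : s = 1 ∨ s = -1)
    (hsε₁ : s * ε₁ = 1) (hsε₂ : s * ε₂ = c) (hne : ε₁ ≠ ε₂)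
    (hfree : ¬ HasSwitchedCopy w (KtildeMat m c))
    (h1 : m ≤ (C.filter fun y => y ≠ x ∧ w x y = ε₁).card)
    (h2 : m ≤ (C.filter fun y => y ≠ x ∧ w x y = ε₂).card) : False := by
  classical
  obtain ⟨A, hAsub, hAcard⟩ := Finset.exists_subset_card_eq h1
  obtain ⟨B, hBsub, hBcard⟩ := Finset.exists_subset_card_eq h2
  have hAmem : ∀ a ∈ A, a ∈ C ∧ a ≠ x ∧ w x a = ε₁ := by
    intro a ha
    have := hAsub ha
    simp only [Finset.mem_filter] at this
    tauto
  have hBmem : ∀ b ∈ B, b ∈ C ∧ b ≠ x ∧ w x b = ε₂ := by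
    intro b hb
    have := hBsub hb
    simp only [Finset.mem_filter] at this
    tauto
  refine hfree (buildCopy m w hsym x A B hAcard hBcard ?_ ?_ ?_ ?_ s c hs ?_ ?_)
  · rw [Finset.disjoint_left]
    intro a ha hb
    exact hne (((hAmem a ha).2.2).symm.trans (hBmem a hb).2.2)
  · intro hx; exact (hAmem x hx).2.1 rfl
  · intro hx; exact (hBmem x hx).2.1 rfl
  · intro a ha b hb hab
    rcases Finset.mem_union.mp ha with h | h <;>
      rcases Finset.mem_union.mp hb with h' | h' <;>
      exact hC a (by first | exact (hAmem a h).1 | exact (hBmem a h).1) b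
        (by first | exact (hAmem b h').1 | exact (hBmem b h').1) hab
  · intro a ha; rw [(hAmem a ha).2.2]; exact hsε₁
  · intro b hb; rw [(hBmem b hb).2.2]; exact hsε₂

theorem stmt15 {V : Type} [Fintype V] [DecidableEq V]
    (m n : ℕ) (hm : 2 ≤ m) (hn : 3 * m - 2 ≤ n)
    (w : V → V → ℤ) (hsym : ∀ x y, w x y = w y x)
    (hval : ∀ x y, x ≠ y → w x y = 0 ∨ w x y = 1 ∨ w x y = -1)
    (hfree0 : ¬ HasSwitchedCopy w (KtildeMat m 0))
    (hfree1 : ¬ HasSwitchedCopy w (KtildeMat m (-1)))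
    (C : Finset V) (hC : ∀ x ∈ C, ∀ y ∈ C, x ≠ y → w x y = 1)
    (hCn : n ≤ C.card) :
    ∀ x : V, ∃ ε : ℤ, (ε = 0 ∨ ε = 1 ∨ ε = -1) ∧
      m ≤ (C.filter fun y => y ≠ x ∧ w x y = ε).card ∧
      ∀ ε' : ℤ, (ε' = 0 ∨ ε' = 1 ∨ ε' = -1) → ε' ≠ ε →
        (C.filter fun y => y ≠ x ∧ w x y = ε').card ≤ m - 1 := by
  classical
  intro x
  set S : ℤ → Finset V := fun ε => C.filter fun y => y ≠ x ∧ w x y = ε with hS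
  -- no two of the three sets can both have card ≥ m
  have key : ∀ ε ε' : ℤ, (ε = 0 ∨ ε = 1 ∨ ε = -1) → (ε' = 0 ∨ ε' = 1 ∨ ε' = -1) →
      ε ≠ ε' → m ≤ (S ε).card → m ≤ (S ε').card → False := by
    intro ε ε' hε hε' hne hbig hbig'
    rcases hε with rfl | rfl | rfl <;> rcases hε' with rfl | rfl | rfl <;>
        first
      | exact hne rfl
      | exact notBoth m w hsym C hC x 1 0 1 0 (Or.inl rfl) (by norm_num) (by norm_num)
          (by norm_num) hfree0 hbig' hbig
      | exact notBoth m w hsym C hC x 1 0 1 0 (Or.inl rfl) (by norm_num) (by norm_num)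
          (by norm_num) hfree0 hbig hbig'
      | exact notBoth m w hsym C hC x (-1) 0 (-1) 0 (Or.inr rfl) (by norm_num) (by norm_num)
          (by norm_num) hfree0 hbig' hbig
      | exact notBoth m w hsym C hC x (-1) 0 (-1) 0 (Or.inr rfl) (by norm_num) (by norm_num)
          (by norm_num) hfree0 hbig hbig'
      | exact notBoth m w hsym C hC x 1 (-1) 1 (-1) (Or.inl rfl) (by norm_num) (by norm_num)
          (by norm_num) hfree1 hbig' hbig
      | exact notBoth m w hsym C hC x 1 (-1) 1 (-1) (Or.inl rfl) (by norm_num) (by norm_num)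
          (by norm_num) hfree1 hbig hbig'
  -- some set has card ≥ m
  have hbig : ∃ ε : ℤ, (ε = 0 ∨ ε = 1 ∨ ε = -1) ∧ m ≤ (S ε).card := by
    by_cases hx : x ∈ C
    · refine ⟨1, Or.inr (Or.inl rfl), ?_⟩
      have hsub : C.erase x ⊆ S 1 := by
        intro y hy
        rw [Finset.mem_erase] at hy
        simp only [hS, Finset.mem_filter]
        exact ⟨hy.2, hy.1, hC x hx y hy.2 (Ne.symm hy.1)⟩
      have := Finset.card_le_card hsub
      have := Finset.card_erase_of_mem hx
      omega
    · by_contra hcon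
      push_neg at hcon
      have h0 := hcon 0 (Or.inl rfl)
      have h1 := hcon 1 (Or.inr (Or.inl rfl))
      have h2 := hcon (-1) (Or.inr (Or.inr rfl))
      have hsub : C ⊆ S 0 ∪ S 1 ∪ S (-1) := by
        intro y hy
        have hyx : y ≠ x := fun h => hx (h ▸ hy)
        simp only [hS, Finset.mem_union, Finset.mem_filter]
        rcases hval x y (Ne.symm hyx) with h | h | h
        · exact Or.inl (Or.inl ⟨hy, hyx, h⟩)
        · exact Or.inl (Or.inr ⟨hy, hyx, h⟩)
        · exact Or.inr ⟨hy, hyx, h⟩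
      have hcard := Finset.card_le_card hsub
      have hc1 := Finset.card_union_le (S 0 ∪ S 1) (S (-1))
      have hc2 := Finset.card_union_le (S 0) (S 1)
      omega
  obtain ⟨ε, hε, hbigε⟩ := hbig
  refine ⟨ε, hε, hbigε, ?_⟩
  intro ε' hε' hne
  by_contra hcon
  have : m ≤ (S ε').card := by
    have hrw : S ε' = Finset.filter (fun y => y ≠ x ∧ w x y = ε') C := rfl
    rw [hrw]; omega
  exact key ε ε' hε hε' (Ne.symm hne) hbigε this
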